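/- For Z(s,t) = π (s cosh(πt/6) - π sinh(πt/6)) / (π cosh(πt/6) - s sinh(πt/6)), one has ∂Z/∂s (s,t) = π^2 / (π cosh(πt/6) - s sinh(πt/6))^2, and moreover exp((1/3)∫_0^t Z(s,t') dt') = π^2 / (π cosh(πt/6) - s sinh(πt/6))^2 for s ∈ [-π, π], t ∈ ℝ. -/

import Mathlib

open Real

noncomputable def Zchar (s t : ℝ) : ℝ :=
  π * (s * Real.cosh (π * t / 6) - π * Real.sinh (π * t / 6)) /
    (π * Real.cosh (π * t / 6) - s * Real.sinh (π * t / 6))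

lemma denom_pos {s : ℝ} (hs : s ∈ Set.Icc (-π) π) (x : ℝ) :
    0 < π * Real.cosh x - s * Real.sinh x := by
  obtain ⟨h1, h2⟩ := hs
  have hc := Real.cosh_pos x
  have hsq : Real.cosh x ^ 2 = Real.sinh x ^ 2 + 1 := Real.cosh_sq x
  have habs : |Real.sinh x| < Real.cosh x := by
    nlinarith [sq_abs (Real.sinh x), abs_nonneg (Real.sinh x)]
  have h3 : s * Real.sinh x ≤ |s| * |Real.sinh x| := by
    calc s * Real.sinh x ≤ |s * Real.sinh x| := le_abs_self _
    _ = |s| * |Real.sinh x| := abs_mul _ _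
  have h4 : |s| ≤ π := abs_le.mpr ⟨h1, h2⟩
  nlinarith [abs_nonneg (Real.sinh x), abs_nonneg s, Real.pi_pos]

theorem characteristic_curves_derivative :
    ∀ s ∈ Set.Icc (-π) π, ∀ t : ℝ,
      HasDerivAt (fun s => Zchar s t)
        (π ^ 2 / (π * Real.cosh (π * t / 6) - s * Real.sinh (π * t / 6)) ^ 2) s ∧
      Real.exp ((1 / 3) * ∫ t' in (0 : ℝ)..t, Zchar s t')
        = π ^ 2 / (π * Real.cosh (π * t / 6) - s * Real.sinh (π * t / 6)) ^ 2 := by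
  intro s hs t
  have hD : ∀ x : ℝ, 0 < π * Real.cosh x - s * Real.sinh x := denom_pos hs
  constructor
  · -- derivative in s
    set c := Real.cosh (π * t / 6) with hc
    set sh := Real.sinh (π * t / 6) with hsh
    have hDt : π * c - s * sh ≠ 0 := (hD _).ne'
    have hN : HasDerivAt (fun s : ℝ => π * (s * c - π * sh)) (π * c) s := by
      simpa using (((hasDerivAt_id s).mul_const c).sub_const (π * sh)).const_mul π
    have hDen : HasDerivAt (fun s : ℝ => π * c - s * sh) (-sh) s := by
      simpa using (HasDerivAt.const_sub (π * c) ((hasDerivAt_id s).mul_const sh))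
    have h := hN.div hDen hDt
    have hid : Real.cosh (π * t / 6) ^ 2 - Real.sinh (π * t / 6) ^ 2 = 1 :=
      Real.cosh_sq_sub_sinh_sq _
    have heq : (π * c * (π * c - s * sh) - π * (s * c - π * sh) * -sh) /
        (π * c - s * sh) ^ 2 = π ^ 2 / (π * c - s * sh) ^ 2 := by
      rw [← hc, ← hsh] at hid
      field_simp
      linear_combination π * hid
    rw [heq] at h
    exact h
  · -- integral identity
    set D : ℝ → ℝ := fun t' => π * Real.cosh (π * t' / 6) - s * Real.sinh (π * t' / 6)
      with hDdef
    have hDpos : ∀ x, 0 < D x := fun x => hD _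
    have hF : ∀ x : ℝ, HasDerivAt (fun t' => -6 * Real.log (D t')) (Zchar s x) x := by
      intro x
      have hu : HasDerivAt (fun t' : ℝ => π * t' / 6) (π / 6) x := by
        simpa using ((hasDerivAt_id x).const_mul π).div_const 6
      have hcosh : HasDerivAt (fun t' : ℝ => Real.cosh (π * t' / 6))
          (Real.sinh (π * x / 6) * (π / 6)) x := (Real.hasDerivAt_cosh _).comp x hu
      have hsinh : HasDerivAt (fun t' : ℝ => Real.sinh (π * t' / 6))
          (Real.cosh (π * x / 6) * (π / 6)) x := (Real.hasDerivAt_sinh _).comp x hu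
      have hDD : HasDerivAt D
          (π * (Real.sinh (π * x / 6) * (π / 6)) - s * (Real.cosh (π * x / 6) * (π / 6))) x :=
        (hcosh.const_mul π).sub (hsinh.const_mul s)
      have hlog := (hDD.log (hDpos x).ne').const_mul (-6 : ℝ)
      refine hlog.congr_deriv (Eq.symm ?_)
      show Zchar s x = _
      unfold Zchar
      rw [hDdef, ← mul_div_assoc]
      congr 1
      ring
    have hcont : Continuous (fun t' => Zchar s t') := by
      apply Continuous.div
      · fun_prop
      · fun_prop
      · exact fun x => (hDpos x).ne'
    have hint : (∫ t' in (0:ℝ)..t, Zchar s t')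
        = -6 * Real.log (D t) - -6 * Real.log (D 0) := by
      exact intervalIntegral.integral_eq_sub_of_hasDerivAt (fun x _ => hF x)
        (hcont.intervalIntegrable 0 t)
    have hD0 : D 0 = π := by simp [hDdef]
    rw [hint, hD0]
    have harg : (1/3 : ℝ) * (-6 * Real.log (D t) - -6 * Real.log π)
        = Real.log (π ^ 2 / D t ^ 2) := by
      rw [Real.log_div (pow_ne_zero _ Real.pi_pos.ne') (pow_ne_zero _ (hDpos t).ne'),
        Real.log_pow, Real.log_pow]
      push_cast
      ring
    rw [harg, Real.exp_log (div_pos (by positivity) (pow_pos (hDpos t) 2))]
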